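/- Let (C, N, 𝓕) be an election with matroid feasibility constraints (downward closed, satisfying the exchange property), and let W ∈ 𝓕 satisfy EJR. Then for each group of voters S ⊆ N that deserves ℓ candidates, the average number of approved candidates in W over S satisfies (1/|S|) · Σ_{i∈S} |A_i ∩ W| ≥ (ℓ − 1)/2. -/

import Mathlib

/-- A group `S` deserves `ℓ` candidates. -/
def Deserves {C N : Type*} [DecidableEq C] [Fintype N] (F : Set (Finset C))
    (A : N → Finset C) (S : Finset N) (ℓ : ℕ) : Prop :=
  ∀ T ∈ F, (∃ X : Finset C, (∀ i ∈ S, X ⊆ A i) ∧ ℓ ≤ X.card ∧ T ∪ X ∈ F) ∨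
    (S.card : ℝ) / (Fintype.card N : ℝ) > (ℓ : ℝ) / ((T.card : ℝ) + (ℓ : ℝ))

/-- `W` satisfies EJR: every nonempty group deserving `ℓ` candidates contains a voter
approving at least `ℓ` members of `W`. -/
def SatisfiesEJR {C N : Type*} [DecidableEq C] [Fintype N] (F : Set (Finset C))
    (A : N → Finset C) (W : Finset C) : Prop :=
  ∀ ℓ : ℕ, ∀ S : Finset N, S.Nonempty → Deserves F A S ℓ →
    ∃ i ∈ S, ℓ ≤ (A i ∩ W).card

/-- Grow an independent set `T` to the size of `Z` using only elements of `Z`. -/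
lemma growF {C : Type*} [DecidableEq C] {F : Set (Finset C)}
    (hex : ∀ X ∈ F, ∀ Y ∈ F, X.card < Y.card → ∃ c ∈ Y \ X, insert c X ∈ F) :
    ∀ k (T Z : Finset C), T ∈ F → Z ∈ F → Z.card = T.card + k →
      ∃ T', T' ∈ F ∧ T ⊆ T' ∧ T' ⊆ T ∪ Z ∧ T'.card = Z.card := by
  intro k
  induction k with
  | zero =>
    intro T Z hT hZ h
    exact ⟨T, hT, subset_rfl, Finset.subset_union_left, by omega⟩
  | succ k ih =>
    intro T Z hT hZ h
    have hlt : T.card < Z.card := by omega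
    obtain ⟨c, hc, hins⟩ := hex T hT Z hZ hlt
    rw [Finset.mem_sdiff] at hc
    have hcard : (insert c T).card = T.card + 1 := Finset.card_insert_of_notMem hc.2
    obtain ⟨T', hT'F, hsub1, hsub2, hcard'⟩ := ih (insert c T) Z hins hZ (by omega)
    refine ⟨T', hT'F, (Finset.subset_insert _ _).trans hsub1, ?_, hcard'⟩
    intro a ha
    have := hsub2 ha
    rw [Finset.mem_union, Finset.mem_insert] at this
    rcases this with (rfl | h) | h
    · exact Finset.mem_union_right _ hc.1
    · exact Finset.mem_union_left _ h
    · exact Finset.mem_union_right _ h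

/-- If `T.erase x` can be extended by `j+1` allowed candidates, then `T` can be
extended by `j` allowed candidates. -/
lemma eraseStep {C : Type*} [DecidableEq C] {F : Set (Finset C)}
    (hex : ∀ X ∈ F, ∀ Y ∈ F, X.card < Y.card → ∃ c ∈ Y \ X, insert c X ∈ F)
    {Q : Finset C → Prop} (hQ : ∀ X' X : Finset C, Q X' → X ⊆ X' → Q X)
    {T : Finset C} {x : C} (hx : x ∈ T) (hT : T ∈ F)
    {X' : Finset C} (hQ' : Q X') {j : ℕ} (hc' : j + 1 ≤ X'.card)
    (hF' : T.erase x ∪ X' ∈ F) :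
    ∃ X, Q X ∧ j ≤ X.card ∧ T ∪ X ∈ F := by
  classical
  set Z := T.erase x ∪ X' with hZ
  have hTx : (T.erase x).card = T.card - 1 := Finset.card_erase_of_mem hx
  have hT1 : 1 ≤ T.card := Finset.card_pos.mpr ⟨x, hx⟩
  have hZcard : Z.card = (X' \ T.erase x).card + (T.erase x).card := by
    rw [hZ, Finset.union_comm, Finset.card_sdiff_add_card]
  have hsplit : (X' ∩ T.erase x).card + (X' \ T.erase x).card = X'.card :=
    Finset.card_inter_add_card_sdiff _ _
  have hmono : (X' ∩ T.erase x).card ≤ (X' ∩ T).card :=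
    Finset.card_le_card (Finset.inter_subset_inter (Finset.Subset.refl X')
      (Finset.erase_subset _ _))
  rcases le_or_gt Z.card T.card with hle | hlt
  · -- X' is essentially inside T already
    refine ⟨X' ∩ T, hQ X' _ hQ' Finset.inter_subset_left, by omega, ?_⟩
    rw [Finset.union_eq_left.mpr Finset.inter_subset_right]
    exact hT
  · obtain ⟨T', hT'F, hsub1, hsub2, hcard'⟩ :=
      growF hex (Z.card - T.card) T Z hT hF' (by omega)
    have hdiff : T' \ T ⊆ X' := by
      intro a ha
      rw [Finset.mem_sdiff] at ha
      have := hsub2 ha.1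
      rw [Finset.mem_union] at this
      rcases this with h | h
      · exact absurd h ha.2
      · rw [hZ, Finset.mem_union] at h
        rcases h with h | h
        · exact absurd (Finset.erase_subset _ _ h) ha.2
        · exact h
    refine ⟨(T' \ T) ∪ (X' ∩ T), hQ X' _ hQ' ?_, ?_, ?_⟩
    · exact Finset.union_subset hdiff Finset.inter_subset_left
    · have hdisj : Disjoint (T' \ T) (X' ∩ T) :=
        Finset.disjoint_left.mpr fun a ha hb => by
          rw [Finset.mem_sdiff] at ha
          exact ha.2 (Finset.mem_inter.mp hb).2
      have hcd : (T' \ T).card = T'.card - T.card := Finset.card_sdiff_of_subset hsub1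
      rw [Finset.card_union_of_disjoint hdisj]
      omega
    · have : T ∪ ((T' \ T) ∪ (X' ∩ T)) = T' := by
        ext a
        simp only [Finset.mem_union, Finset.mem_sdiff, Finset.mem_inter]
        constructor
        · rintro (h | ⟨h, _⟩ | ⟨_, h⟩)
          · exact hsub1 h
          · exact h
          · exact hsub1 h
        · intro h
          by_cases haT : a ∈ T
          · exact Or.inl haT
          · exact Or.inr (Or.inl ⟨h, haT⟩)
      rw [this]
      exact hT'F

lemma gaussIcc (m : ℕ) : (∑ j ∈ Finset.Icc 1 m, (j : ℝ)) = m * (m + 1) / 2 := by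
  induction m with
  | zero => simp
  | succ k ih =>
    rw [Finset.sum_Icc_succ_top (by omega : 1 ≤ k + 1), ih]
    push_cast
    ring

/-- Under matroid constraints, an EJR outcome gives each group deserving `ℓ`
candidates an average of at least `(ℓ-1)/2` approved candidates. -/
theorem stmt8 {C N : Type*} [DecidableEq C] [Fintype N]
    (F : Set (Finset C)) (A : N → Finset C)
    (hne : F.Nonempty) (hdc : ∀ X ∈ F, ∀ Y : Finset C, Y ⊆ X → Y ∈ F)
    (hex : ∀ X ∈ F, ∀ Y ∈ F, X.card < Y.card → ∃ c ∈ Y \ X, insert c X ∈ F)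
    (W : Finset C) (hW : W ∈ F) (hEJR : SatisfiesEJR F A W)
    (S : Finset N) (hS : S.Nonempty) (ℓ : ℕ) (hdes : Deserves F A S ℓ) :
    ((ℓ : ℝ) - 1) / 2 ≤ (1 / (S.card : ℝ)) * ∑ i ∈ S, ((A i ∩ W).card : ℝ) := by
  classical
  have hscpos : (0 : ℝ) < (S.card : ℝ) := by
    exact_mod_cast Finset.card_pos.mpr hS
  -- trivial case ℓ ≤ 1
  rcases le_or_gt ℓ 1 with hl1 | hl2
  · have h1 : ((ℓ : ℝ) - 1) / 2 ≤ 0 := by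
      have : (ℓ : ℝ) ≤ 1 := by exact_mod_cast hl1
      linarith
    refine h1.trans ?_
    positivity
  -- main case : 2 ≤ ℓ
  have hnpos : (0 : ℝ) < (Fintype.card N : ℝ) := by
    have : 0 < Fintype.card N := Fintype.card_pos_iff.mpr ⟨hS.choose⟩
    exact_mod_cast this
  have hℓpos : (0 : ℝ) < (ℓ : ℝ) := by
    have : 0 < ℓ := by omega
    exact_mod_cast this
  obtain ⟨X0, hX0⟩ := hne
  have hempty : (∅ : Finset C) ∈ F := hdc X0 hX0 ∅ (Finset.empty_subset _)
  -- there is a common feasible set Y of size ≥ ℓ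
  obtain ⟨Y, hY1, hY2, hYF⟩ :
      ∃ Y : Finset C, (∀ i ∈ S, Y ⊆ A i) ∧ ℓ ≤ Y.card ∧ Y ∈ F := by
    rcases hdes ∅ hempty with ⟨X, h1, h2, h3⟩ | hgt
    · exact ⟨X, h1, h2, by rwa [Finset.empty_union] at h3⟩
    · exfalso
      rw [Finset.card_empty] at hgt
      have h1 : ((ℓ : ℝ)) / ((0 : ℕ) + (ℓ : ℝ)) = 1 := by
        rw [Nat.cast_zero, zero_add, div_self (ne_of_gt hℓpos)]
      rw [h1] at hgt
      have h2 : (S.card : ℝ) ≤ (Fintype.card N : ℝ) := by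
        exact_mod_cast Finset.card_le_univ S
      have h3 : (S.card : ℝ) / (Fintype.card N : ℝ) ≤ 1 :=
        (div_le_one hnpos).mpr h2
      linarith
  -- descent lemma
  have descend : ∀ k j (T : Finset C), T ∈ F →
      ¬ (∃ X : Finset C, (∀ i ∈ S, X ⊆ A i) ∧ j ≤ X.card ∧ T ∪ X ∈ F) → j + k = ℓ →
      ∃ T', T' ∈ F ∧ T'.card + ℓ ≤ T.card + j ∧
        ¬ (∃ X : Finset C, (∀ i ∈ S, X ⊆ A i) ∧ ℓ ≤ X.card ∧ T' ∪ X ∈ F) := by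
    intro k
    induction k with
    | zero =>
      intro j T hT hnP hjk
      obtain rfl : j = ℓ := by omega
      exact ⟨T, hT, by omega, hnP⟩
    | succ k ih =>
      intro j T hT hnP hjk
      have hTne : T.Nonempty := by
        rcases T.eq_empty_or_nonempty with rfl | h
        · exact absurd ⟨Y, hY1, by omega, by rwa [Finset.empty_union]⟩ hnP
        · exact h
      obtain ⟨x, hx⟩ := hTne
      have hTe : T.erase x ∈ F := hdc T hT _ (Finset.erase_subset _ _)
      have hnP' : ¬ (∃ X : Finset C, (∀ i ∈ S, X ⊆ A i) ∧ (j + 1) ≤ X.card ∧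
          T.erase x ∪ X ∈ F) := by
        rintro ⟨X', hQ', hc', hF'⟩
        exact hnP (eraseStep hex
          (fun X' X h hsub i hi => (hsub.trans (h i hi))) hx hT hQ' hc' hF')
      obtain ⟨T', hT'F, hcard, hnPT'⟩ := ih (j + 1) (T.erase x) hTe hnP' (by omega)
      have := Finset.card_erase_of_mem hx
      have hT1 : 1 ≤ T.card := Finset.card_pos.mpr ⟨x, hx⟩
      exact ⟨T', hT'F, by omega, hnPT'⟩
  -- key bound for each level j
  have key : ∀ j, 1 ≤ j → j ≤ ℓ →
      ((S.filter (fun i => (A i ∩ W).card < j)).card : ℝ) * ℓ ≤ j * S.card := by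
    intro j hj1 hjℓ
    set S' := S.filter (fun i => (A i ∩ W).card < j) with hS'def
    rcases S'.eq_empty_or_nonempty with hS'e | hS'ne
    · rw [hS'e]
      simp only [Finset.card_empty, Nat.cast_zero, zero_mul]
      positivity
    · have hndes : ¬ Deserves F A S' j := by
        intro hD
        obtain ⟨i, hiS', hsat⟩ := hEJR j S' hS'ne hD
        have := (Finset.mem_filter.mp hiS').2
        omega
      unfold Deserves at hndes
      push_neg at hndes
      obtain ⟨T, hTF, hnoX, hsize⟩ := hndes
      have hnP : ¬ (∃ X : Finset C, (∀ i ∈ S, X ⊆ A i) ∧ j ≤ X.card ∧ T ∪ X ∈ F) := by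
        rintro ⟨X, h1, h2, h3⟩
        exact absurd h3 (hnoX X (fun i hi => h1 i (Finset.mem_filter.mp hi).1) h2)
      obtain ⟨T', hT'F, hT'card, hnP'⟩ := descend (ℓ - j) j T hTF hnP (by omega)
      have hgt := (hdes T' hT'F).resolve_left hnP'
      -- real arithmetic
      have hjpos : (0 : ℝ) < (j : ℝ) := by exact_mod_cast hj1
      have htj : (0 : ℝ) < (T.card : ℝ) + (j : ℝ) := by positivity
      have ht'ℓ : (0 : ℝ) < (T'.card : ℝ) + (ℓ : ℝ) := by positivity
      have h1 : (S'.card : ℝ) * ((T.card : ℝ) + j) ≤ j * (Fintype.card N : ℝ) := by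
        rw [div_le_div_iff₀ hnpos htj] at hsize
        exact hsize
      have h2 : (ℓ : ℝ) * (Fintype.card N : ℝ) < (S.card : ℝ) * ((T'.card : ℝ) + ℓ) := by
        rw [gt_iff_lt, div_lt_div_iff₀ ht'ℓ hnpos] at hgt
        exact hgt
      have h3 : (T'.card : ℝ) + ℓ ≤ (T.card : ℝ) + j := by
        have := hT'card
        push_cast
        exact_mod_cast this
      have h4 : (S'.card : ℝ) * ((T.card : ℝ) + j) * (ℓ : ℝ) ≤
          (S.card : ℝ) * ((T.card : ℝ) + j) * (j : ℝ) := by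
        calc (S'.card : ℝ) * ((T.card : ℝ) + j) * (ℓ : ℝ)
            ≤ ((j : ℝ) * (Fintype.card N : ℝ)) * (ℓ : ℝ) :=
              mul_le_mul_of_nonneg_right h1 hℓpos.le
          _ = ((ℓ : ℝ) * (Fintype.card N : ℝ)) * (j : ℝ) := by ring
          _ ≤ ((S.card : ℝ) * ((T'.card : ℝ) + ℓ)) * (j : ℝ) :=
              mul_le_mul_of_nonneg_right h2.le hjpos.le
          _ ≤ (S.card : ℝ) * ((T.card : ℝ) + j) * (j : ℝ) :=
              mul_le_mul_of_nonneg_right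
                (mul_le_mul_of_nonneg_left h3 hscpos.le) hjpos.le
      have h4' : ((S'.card : ℝ) * (ℓ : ℝ)) * ((T.card : ℝ) + j) ≤
          ((S.card : ℝ) * (j : ℝ)) * ((T.card : ℝ) + j) := by nlinarith [h4]
      have h5 : (S'.card : ℝ) * (ℓ : ℝ) ≤ (S.card : ℝ) * (j : ℝ) :=
        le_of_mul_le_mul_right h4' htj
      nlinarith [h5]
  -- counting: sum over thresholds
  have hcount : ∑ j ∈ Finset.Icc 1 ℓ, (S.filter (fun i => j ≤ (A i ∩ W).card)).card
      ≤ ∑ i ∈ S, (A i ∩ W).card := by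
    have hrw : ∀ j : ℕ, (S.filter (fun i => j ≤ (A i ∩ W).card)).card =
        ∑ i ∈ S, if j ≤ (A i ∩ W).card then 1 else 0 := by
      intro j
      rw [Finset.card_filter]
    calc ∑ j ∈ Finset.Icc 1 ℓ, (S.filter (fun i => j ≤ (A i ∩ W).card)).card
        = ∑ j ∈ Finset.Icc 1 ℓ, ∑ i ∈ S, if j ≤ (A i ∩ W).card then 1 else 0 := by
          exact Finset.sum_congr rfl fun j _ => hrw j
      _ = ∑ i ∈ S, ∑ j ∈ Finset.Icc 1 ℓ, if j ≤ (A i ∩ W).card then 1 else 0 :=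
          Finset.sum_comm
      _ ≤ ∑ i ∈ S, (A i ∩ W).card := by
          apply Finset.sum_le_sum
          intro i _
          set c := (A i ∩ W).card
          calc (∑ j ∈ Finset.Icc 1 ℓ, if j ≤ c then 1 else 0)
              = ((Finset.Icc 1 ℓ).filter (fun j => j ≤ c)).card :=
                (Finset.card_filter _ _).symm
            _ ≤ (Finset.Icc 1 c).card := by
                apply Finset.card_le_card
                intro j hj
                simp only [Finset.mem_filter, Finset.mem_Icc] at *
                omega
            _ = c := by rw [Nat.card_Icc]; omega
  -- convert to reals and sum the per-level bounds
  have hsum1 : ∀ j ∈ Finset.Icc 1 ℓ, ((ℓ : ℝ) - j) * S.card ≤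
      (ℓ : ℝ) * ((S.filter (fun i => j ≤ (A i ∩ W).card)).card : ℝ) := by
    intro j hj
    rw [Finset.mem_Icc] at hj
    have hkey := key j hj.1 hj.2
    have hsplit : (S.filter (fun i => (A i ∩ W).card < j)).card +
        (S.filter (fun i => j ≤ (A i ∩ W).card)).card = S.card := by
      have := Finset.card_filter_add_card_filter_not
        (s := S) (p := fun i => (A i ∩ W).card < j)
      simpa only [not_lt] using this
    have hc : ((S.filter (fun i => (A i ∩ W).card < j)).card : ℝ) +
        ((S.filter (fun i => j ≤ (A i ∩ W).card)).card : ℝ) = (S.card : ℝ) := by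
      exact_mod_cast hsplit
    nlinarith [hkey]
  have hB : ∑ j ∈ Finset.Icc 1 ℓ, (((ℓ : ℝ) - j) * S.card) =
      (ℓ : ℝ) * ((ℓ : ℝ) - 1) / 2 * S.card := by
    rw [← Finset.sum_mul, Finset.sum_sub_distrib, Finset.sum_const, Nat.card_Icc,
      gaussIcc, nsmul_eq_mul]
    push_cast [Nat.add_sub_cancel]
    ring
  have hD' : ∑ j ∈ Finset.Icc 1 ℓ,
      ((S.filter (fun i => j ≤ (A i ∩ W).card)).card : ℝ) ≤
      ∑ i ∈ S, ((A i ∩ W).card : ℝ) := by exact_mod_cast hcount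
  have hsum2 : (ℓ : ℝ) * ((ℓ : ℝ) - 1) / 2 * S.card ≤
      (ℓ : ℝ) * ∑ i ∈ S, ((A i ∩ W).card : ℝ) := by
    calc (ℓ : ℝ) * ((ℓ : ℝ) - 1) / 2 * S.card
        = ∑ j ∈ Finset.Icc 1 ℓ, (((ℓ : ℝ) - j) * S.card) := hB.symm
      _ ≤ ∑ j ∈ Finset.Icc 1 ℓ, (ℓ : ℝ) *
            ((S.filter (fun i => j ≤ (A i ∩ W).card)).card : ℝ) :=
          Finset.sum_le_sum hsum1
      _ = (ℓ : ℝ) * ∑ j ∈ Finset.Icc 1 ℓ,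
            ((S.filter (fun i => j ≤ (A i ∩ W).card)).card : ℝ) := by
          rw [← Finset.mul_sum]
      _ ≤ (ℓ : ℝ) * ∑ i ∈ S, ((A i ∩ W).card : ℝ) :=
          mul_le_mul_of_nonneg_left hD' hℓpos.le
  -- finish
  have hmain : ((ℓ : ℝ) - 1) / 2 * S.card ≤ ∑ i ∈ S, ((A i ∩ W).card : ℝ) := by
    nlinarith [hsum2, hℓpos]
  rw [one_div, inv_mul_eq_div, le_div_iff₀ hscpos]
  linarith
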